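/- Let ε be a primitive ℓ-th root of unity in a field of characteristic zero, with ℓ ≥ 1. If n and m are natural numbers with n < ℓ, m < ℓ, and n + m ≥ ℓ, then the evaluation at q = ε of the Gaussian binomial coefficient binom(n+m, n)_q is zero. -/

import Mathlib

open Polynomial Finset

/-- The Gaussian binomial coefficient `binom(ν,n)_q ∈ ℤ[q]`, defined by the `q`-Pascal
recursion. -/
noncomputable def gaussBinom : ℕ → ℕ → Polynomial ℤ
  | _, 0 => 1
  | 0, _ + 1 => 0
  | ν + 1, n + 1 => gaussBinom ν n + Polynomial.X ^ (n + 1) * gaussBinom ν (n + 1)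

noncomputable def qInt (k : ℕ) : Polynomial ℤ := ∑ i ∈ Finset.range k, Polynomial.X ^ i

noncomputable def qFact : ℕ → Polynomial ℤ
  | 0 => 1
  | k + 1 => qFact k * qInt (k + 1)

lemma qInt_add (a b : ℕ) : qInt (a + b) = qInt a + Polynomial.X ^ a * qInt b := by
  induction b with
  | zero => simp [qInt]
  | succ b ih =>
      rw [Nat.add_succ]
      simp only [qInt, Finset.sum_range_succ] at *
      rw [ih]; ring

lemma gaussBinom_zero (ν : ℕ) : gaussBinom ν 0 = 1 := by cases ν <;> rfl

lemma gaussBinom_of_lt : ∀ ν n, ν < n → gaussBinom ν n = 0 := by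
  intro ν
  induction ν with
  | zero => intro n hn; cases n; omega; rfl
  | succ ν ih =>
      intro n hn
      cases n with
      | zero => omega
      | succ n =>
          rw [gaussBinom, ih n (by omega), ih (n + 1) (by omega)]
          ring

lemma gaussBinom_self : ∀ ν, gaussBinom ν ν = 1 := by
  intro ν
  induction ν with
  | zero => rfl
  | succ ν ih =>
      rw [gaussBinom, ih, gaussBinom_of_lt ν (ν + 1) (by omega)]
      ring

lemma qFact_mul (n m : ℕ) :
    qFact n * qFact m * gaussBinom (n + m) n = qFact (n + m) := by
  induction n generalizing m with
  | zero => simp [qFact, gaussBinom_zero]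
  | succ n ihn =>
      induction m with
      | zero => simp [qFact, gaussBinom_self]
      | succ m ihm =>
          have h1 : n + 1 + (m + 1) = (n + (m + 1)) + 1 := by omega
          have h2 : n + 1 + m + 1 = (n + (m + 1)) + 1 := by omega
          rw [h1, gaussBinom]
          have e1 := ihn (m + 1)
          have e2 := ihm
          rw [show qFact ((n + (m + 1)) + 1) = qFact (n + (m + 1)) * qInt (n + (m + 1) + 1) from rfl]
          rw [show n + (m + 1) + 1 = (n + 1) + (m + 1) from by omega, qInt_add (n + 1) (m + 1)]
          have e2' : qFact (n + 1) * qFact m * gaussBinom (n + (m + 1)) (n + 1) = qFact (n + (m + 1)) := by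
            rw [show n + (m + 1) = n + 1 + m from by omega]; exact e2
          calc qFact (n + 1) * qFact (m + 1) *
                (gaussBinom (n + (m + 1)) n + Polynomial.X ^ (n + 1) * gaussBinom (n + (m + 1)) (n + 1))
              = qInt (n + 1) * (qFact n * qFact (m + 1) * gaussBinom (n + (m + 1)) n)
                + Polynomial.X ^ (n + 1) * qInt (m + 1) *
                  (qFact (n + 1) * qFact m * gaussBinom (n + (m + 1)) (n + 1)) := by
                rw [show qFact (n+1) = qFact n * qInt (n+1) from rfl,
                  show qFact (m+1) = qFact m * qInt (m+1) from rfl]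
                ring
            _ = qInt (n + 1) * qFact (n + (m + 1)) + Polynomial.X ^ (n + 1) * qInt (m + 1) * qFact (n + (m + 1)) := by
                rw [e1, e2']
            _ = qFact (n + (m + 1)) * (qInt (n + 1) + Polynomial.X ^ (n + 1) * qInt (m + 1)) := by ring

theorem gaussBinom_eval_primitiveRoot_eq_zero {K : Type*} [Field K] [CharZero K]
    (ℓ : ℕ) (hℓ : 1 ≤ ℓ) (ε : K) (hε : IsPrimitiveRoot ε ℓ) (n m : ℕ)
    (hn : n < ℓ) (hm : m < ℓ) (hnm : ℓ ≤ n + m) :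
    Polynomial.aeval ε (gaussBinom (n + m) n) = 0 := by
  have hℓ2 : 2 ≤ ℓ := by omega
  have hε1 : ε ≠ 1 := by
    intro h
    have := hε.pow_ne_one_of_pos_of_lt (by omega : 1 ≠ 0) (by omega : 1 < ℓ)
    simp [h] at this
  -- evaluation of qInt
  have heval : ∀ k, Polynomial.aeval ε (qInt k) = ∑ i ∈ Finset.range k, ε ^ i := by
    intro k; simp [qInt]
  have hzero : Polynomial.aeval ε (qInt ℓ) = 0 := by
    rw [heval]
    exact hε.geom_sum_eq_zero (by omega)
  have hne : ∀ k, 1 ≤ k → k < ℓ → Polynomial.aeval ε (qInt k) ≠ 0 := by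
    intro k hk1 hk2
    rw [heval, geom_sum_eq hε1]
    have hpow : ε ^ k ≠ 1 := hε.pow_ne_one_of_pos_of_lt (by omega) hk2
    intro h
    rcases div_eq_zero_iff.mp h with h' | h'
    · exact hpow (sub_eq_zero.mp h')
    · exact sub_ne_zero.mpr hε1 h'
  have hfactne : ∀ k, k < ℓ → Polynomial.aeval ε (qFact k) ≠ 0 := by
    intro k hk
    induction k with
    | zero => simp [qFact]
    | succ k ih =>
        rw [show qFact (k+1) = qFact k * qInt (k+1) from rfl, map_mul]
        exact mul_ne_zero (ih (by omega)) (hne (k+1) (by omega) hk)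
  have hfactzero : Polynomial.aeval ε (qFact (n + m)) = 0 := by
    -- qFact (n+m) has factor qInt ℓ
    obtain ⟨j, hj⟩ : ∃ j, n + m = ℓ + j := ⟨n + m - ℓ, by omega⟩
    rw [hj]
    clear hj hnm
    induction j with
    | zero =>
        cases ℓ with
        | zero => omega
        | succ l =>
            rw [show qFact (l + 1 + 0) = qFact l * qInt (l + 1) from rfl, map_mul, hzero, mul_zero]
    | succ j ih =>
        rw [show ℓ + (j + 1) = (ℓ + j) + 1 from rfl,
          show qFact (ℓ + j + 1) = qFact (ℓ + j) * qInt (ℓ + j + 1) from rfl, map_mul, ih, zero_mul]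
  have key := qFact_mul n m
  have := congrArg (Polynomial.aeval ε) key
  rw [map_mul, map_mul, hfactzero] at this
  have hn' := hfactne n hn
  have hm' := hfactne m hm
  rcases mul_eq_zero.mp this with h | h
  · exact absurd (mul_eq_zero.mp h) (by push_neg; exact ⟨hn', hm'⟩)
  · exact h
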